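/- Let 1 < α < ∞ and let ρ be a density matrix on ℂ^{d_A} ⊗ ℂ^{d_B} with marginals ρ_A, ρ_B, and let M_α = max{ (‖ρ_A‖_∞/‖ρ_A‖_α)^{α−1}, (‖ρ_B‖_∞/‖ρ_B‖_α)^{α−1} }. If M_α ≤ √(‖ρ‖_α), then ‖ρ_A‖_α + ‖ρ_B‖_α ≤ 2·√(‖ρ‖_α). -/

import Mathlib

noncomputable section
open scoped ComplexOrder Kronecker

/-- A density matrix: positive semidefinite with unit trace. -/
def IsDensityMatrix {ι : Type*} [Fintype ι] (ρ : Matrix ι ι ℂ) : Prop :=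
  ρ.PosSemidef ∧ ρ.trace = 1

/-- Marginal on system `A` of a bipartite matrix. -/
def margA {dA dB : ℕ} (ρ : Matrix (Fin dA × Fin dB) (Fin dA × Fin dB) ℂ) :
    Matrix (Fin dA) (Fin dA) ℂ :=
  fun a a' => ∑ b, ρ (a, b) (a', b)

/-- Marginal on system `B` of a bipartite matrix. -/
def margB {dA dB : ℕ} (ρ : Matrix (Fin dA × Fin dB) (Fin dA × Fin dB) ℂ) :
    Matrix (Fin dB) (Fin dB) ℂ :=
  fun b b' => ∑ a, ρ (a, b) (a, b')


/-- Schatten α-norm of a (Hermitian, PSD) matrix, via its eigenvalues. -/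
def schattenNorm {ι : Type*} [Fintype ι] [DecidableEq ι] (α : ℝ)
    (σ : Matrix ι ι ℂ) : ℝ :=
  if h : σ.IsHermitian then (∑ i, h.eigenvalues i ^ α) ^ (1 / α) else 0

/-- Operator (∞-Schatten) norm of a (Hermitian, PSD) matrix: its largest eigenvalue. -/
def schattenInftyNorm {ι : Type*} [Fintype ι] [DecidableEq ι]
    (σ : Matrix ι ι ℂ) : ℝ :=
  if h : σ.IsHermitian then ⨆ i, h.eigenvalues i else 0


/-- Eq. (5), first case: if `M_α ≤ √(‖ρ_AB‖_α)` then
`‖ρ_A‖_α + ‖ρ_B‖_α ≤ 2·√(‖ρ_AB‖_α)`. -/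
lemma margA_eq_sum {dA dB : ℕ} (ρ : Matrix (Fin dA × Fin dB) (Fin dA × Fin dB) ℂ) :
    margA ρ = ∑ b, ρ.submatrix (fun a => (a, b)) (fun a => (a, b)) := by
  ext a a'
  simp [margA, Matrix.sum_apply, Matrix.submatrix_apply]

lemma margB_eq_sum {dA dB : ℕ} (ρ : Matrix (Fin dA × Fin dB) (Fin dA × Fin dB) ℂ) :
    margB ρ = ∑ a, ρ.submatrix (fun b => (a, b)) (fun b => (a, b)) := by
  ext b b'
  simp [margB, Matrix.sum_apply, Matrix.submatrix_apply]

lemma sum_posSemidef {ι κ : Type*} [Fintype ι] [Fintype κ]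
    (f : κ → Matrix ι ι ℂ) (h : ∀ k, (f k).PosSemidef) :
    (∑ k, f k).PosSemidef := by
  classical
  refine Finset.sum_induction f _ (fun a b ha hb => ha.add hb) Matrix.PosSemidef.zero
    (fun k _ => h k)

/-- sum of eigenvalues = trace -/
lemma sum_eigenvalues_eq_trace {ι : Type*} [Fintype ι] [DecidableEq ι]
    {σ : Matrix ι ι ℂ} (h : σ.IsHermitian) :
    (∑ i, (h.eigenvalues i : ℂ)) = σ.trace := by
  conv_rhs => rw [h.spectral_theorem]
  rw [Unitary.conjStarAlgAut_apply, Matrix.trace_mul_cycle]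
  simp [Matrix.trace_diagonal]

lemma key {ι : Type*} [Fintype ι] [DecidableEq ι] {α : ℝ} (hα : 1 < α)
    {σ : Matrix ι ι ℂ} (hpsd : σ.PosSemidef) (htr : σ.trace = 1) :
    schattenNorm α σ ≤ (schattenInftyNorm σ / schattenNorm α σ) ^ (α - 1) := by
  have h := hpsd.isHermitian
  have hnonneg : ∀ i, 0 ≤ h.eigenvalues i := hpsd.eigenvalues_nonneg
  have hsum : ∑ i, h.eigenvalues i = 1 := by
    have := sum_eigenvalues_eq_trace h
    rw [htr] at this
    exact_mod_cast this
  have hne : Nonempty ι := by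
    by_contra hempty
    simp [not_nonempty_iff.mp hempty] at hsum
  -- L := sup of eigenvalues
  set L : ℝ := ⨆ i, h.eigenvalues i with hL
  have hLmem : ∀ i, h.eigenvalues i ≤ L :=
    fun i => le_ciSup (Set.Finite.bddAbove (Set.finite_range _)) i
  have hLpos : 0 ≤ L := le_trans (hnonneg (Classical.arbitrary ι)) (hLmem _)
  set S : ℝ := ∑ i, h.eigenvalues i ^ α with hS
  have hα0 : (0:ℝ) < α := lt_trans one_pos hα
  have hSpos : 0 < S := by
    have : ∃ i, 0 < h.eigenvalues i := by
      by_contra hc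
      push_neg at hc
      have : ∑ i, h.eigenvalues i = 0 := Finset.sum_eq_zero fun i _ =>
        le_antisymm (hc i) (hnonneg i)
      rw [hsum] at this; norm_num at this
    obtain ⟨i, hi⟩ := this
    refine lt_of_lt_of_le (Real.rpow_pos_of_pos hi α) ?_
    exact Finset.single_le_sum (fun j _ => Real.rpow_nonneg (hnonneg j) α) (Finset.mem_univ i)
  have hSle : S ≤ L ^ (α - 1) := by
    calc S ≤ ∑ i, L ^ (α - 1) * h.eigenvalues i := by
          refine Finset.sum_le_sum fun i _ => ?_
          rcases eq_or_lt_of_le (hnonneg i) with he | he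
          · rw [← he, Real.zero_rpow (ne_of_gt hα0)]
            positivity
          · have heq : h.eigenvalues i ^ α = h.eigenvalues i ^ (α - 1) * h.eigenvalues i := by
              have h2 := Real.rpow_add he (α - 1) 1
              rw [Real.rpow_one] at h2
              rw [← h2]
              norm_num
            rw [heq]
            have : h.eigenvalues i ^ (α - 1) ≤ L ^ (α - 1) :=
              Real.rpow_le_rpow (hnonneg i) (hLmem i) (by linarith)
            exact mul_le_mul_of_nonneg_right this (hnonneg i)
      _ = L ^ (α - 1) := by rw [← Finset.mul_sum, hsum, mul_one]
  set N : ℝ := S ^ (1/α) with hN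
  have hNpos : 0 < N := Real.rpow_pos_of_pos hSpos _
  have hNalpha : N ^ α = S := by
    rw [hN, ← Real.rpow_mul hSpos.le, one_div_mul_cancel (ne_of_gt hα0), Real.rpow_one]
  have key1 : N ≤ (L / N) ^ (α - 1) := by
    rw [Real.div_rpow hLpos (le_of_lt hNpos), le_div_iff₀ (Real.rpow_pos_of_pos hNpos _)]
    have hmul : N * N ^ (α - 1) = N ^ α := by
      have := Real.rpow_add hNpos 1 (α - 1)
      rw [Real.rpow_one] at this
      rw [← this]
      norm_num
    calc N * N ^ (α - 1) = N ^ α := hmul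
      _ = S := hNalpha
      _ ≤ L ^ (α - 1) := hSle
  have e1 : schattenNorm α σ = N := by rw [schattenNorm, dif_pos h]
  have e2 : schattenInftyNorm σ = L := by rw [schattenInftyNorm, dif_pos h]
  rw [e1, e2]
  exact key1

lemma margA_posSemidef {dA dB : ℕ} {ρ : Matrix (Fin dA × Fin dB) (Fin dA × Fin dB) ℂ}
    (hρ : ρ.PosSemidef) : (margA ρ).PosSemidef := by
  rw [margA_eq_sum]
  exact sum_posSemidef _ fun b => hρ.submatrix _

lemma margB_posSemidef {dA dB : ℕ} {ρ : Matrix (Fin dA × Fin dB) (Fin dA × Fin dB) ℂ}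
    (hρ : ρ.PosSemidef) : (margB ρ).PosSemidef := by
  rw [margB_eq_sum]
  exact sum_posSemidef _ fun a => hρ.submatrix _

lemma margA_trace {dA dB : ℕ} (ρ : Matrix (Fin dA × Fin dB) (Fin dA × Fin dB) ℂ) :
    (margA ρ).trace = ρ.trace := by
  simp [Matrix.trace, margA, Matrix.diag, Fintype.sum_prod_type]

lemma margB_trace {dA dB : ℕ} (ρ : Matrix (Fin dA × Fin dB) (Fin dA × Fin dB) ℂ) :
    (margB ρ).trace = ρ.trace := by
  simp only [Matrix.trace, margB, Matrix.diag, Fintype.sum_prod_type]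
  exact Finset.sum_comm

theorem audenaert_sqrt_case {dA dB : ℕ} (α : ℝ) (hα : 1 < α)
    (ρ : Matrix (Fin dA × Fin dB) (Fin dA × Fin dB) ℂ) (hρ : IsDensityMatrix ρ)
    (hM : max ((schattenInftyNorm (margA ρ) / schattenNorm α (margA ρ)) ^ (α - 1))
              ((schattenInftyNorm (margB ρ) / schattenNorm α (margB ρ)) ^ (α - 1))
          ≤ Real.sqrt (schattenNorm α ρ)) :
    schattenNorm α (margA ρ) + schattenNorm α (margB ρ)
      ≤ 2 * Real.sqrt (schattenNorm α ρ) := by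
  obtain ⟨hpsd, htr⟩ := hρ
  have hA : schattenNorm α (margA ρ) ≤ Real.sqrt (schattenNorm α ρ) :=
    le_trans (key hα (margA_posSemidef hpsd) (by rw [margA_trace, htr]))
      (le_trans (le_max_left _ _) hM)
  have hB : schattenNorm α (margB ρ) ≤ Real.sqrt (schattenNorm α ρ) :=
    le_trans (key hα (margB_posSemidef hpsd) (by rw [margB_trace, htr]))
      (le_trans (le_max_right _ _) hM)
  linarith

end
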